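/- arXiv:2605.06883 — 2 statements merged into one kernel-verified Lean document; each statement's English description precedes it below -/
import Mathlib

section
/- For the unbiased MMD U-statistic estimator with a kernel bounded by 0 ≤ k ≤ ν, a swap of a single X-coordinate X_l ↦ X_l' changes the value of the estimator by at most 4ν/m, where m is the X-sample size. -/
open Finset

/-- Unbiased MMD U-statistic estimator. -/
noncomputable def mmdU {U : Type*} (k : U → U → ℝ) {m n : ℕ}
    (X : Fin m → U) (Y : Fin n → U) : ℝ :=
  (∑ i, ∑ j, if i ≠ j then k (X i) (X j) else 0) / ((m : ℝ) * ((m : ℝ) - 1))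
    + (∑ i, ∑ j, if i ≠ j then k (Y i) (Y j) else 0) / ((n : ℝ) * ((n : ℝ) - 1))
    - (2 / ((m : ℝ) * (n : ℝ))) * ∑ i, ∑ j, k (X i) (Y j)

lemma mmd_count_eq {m : ℕ} (l : Fin m) (ν : ℝ) :
    ∑ j : Fin m, (if j = l then ν else (0:ℝ)) = ν := by
  simp

lemma mmd_count_ne {m : ℕ} (l : Fin m) (ν : ℝ) :
    ∑ j : Fin m, (if j ≠ l then ν else (0:ℝ)) = ((m:ℝ) - 1) * ν := by
  have h : ∀ j : Fin m, (if j ≠ l then ν else (0:ℝ)) = ν - (if j = l then ν else 0) := by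
    intro j; by_cases hj : j = l <;> simp [hj]
  rw [Finset.sum_congr rfl (fun j _ => h j), Finset.sum_sub_distrib, Finset.sum_const,
    mmd_count_eq l ν]
  simp [Finset.card_univ]
  ring

lemma mmd_aux_S {U : Type*} (k : U → U → ℝ) (ν : ℝ)
    (hk : ∀ u u', 0 ≤ k u u' ∧ k u u' ≤ ν)
    {m : ℕ} (X : Fin m → U) (l : Fin m) (x' : U) :
    |(∑ i, ∑ j, if i ≠ j then k (Function.update X l x' i) (Function.update X l x' j) else 0)
      - (∑ i, ∑ j, if i ≠ j then k (X i) (X j) else 0)| ≤ 2 * ((m:ℝ) - 1) * ν := by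
  set X' := Function.update X l x' with hX'
  have hν : 0 ≤ ν := le_trans (hk x' x').1 (hk x' x').2
  have hup : ∀ i : Fin m, i ≠ l → X' i = X i := fun i hi => Function.update_of_ne hi _ _
  have key : ∀ (u v u' v' : U) (c : Prop) (_ : Decidable c),
      |(if c then k u v else 0) - (if c then k u' v' else 0)| ≤ ν := by
    intro u v u' v' c _
    have h1 := hk u v; have h2 := hk u' v'
    split_ifs
    · rw [abs_le]; constructor <;> linarith [h1.1, h1.2, h2.1, h2.2]
    · simpa using hν
  rw [← Finset.sum_sub_distrib]
  simp_rw [← Finset.sum_sub_distrib]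
  calc |∑ i, ∑ j, ((if i ≠ j then k (X' i) (X' j) else 0) - (if i ≠ j then k (X i) (X j) else 0))|
      ≤ ∑ i, |∑ j, ((if i ≠ j then k (X' i) (X' j) else 0) - (if i ≠ j then k (X i) (X j) else 0))| :=
        Finset.abs_sum_le_sum_abs _ _
    _ ≤ ∑ i, ∑ j, |((if i ≠ j then k (X' i) (X' j) else 0) - (if i ≠ j then k (X i) (X j) else 0))| :=
        Finset.sum_le_sum (fun i _ => Finset.abs_sum_le_sum_abs _ _)
    _ ≤ ∑ i : Fin m, ∑ j : Fin m,
          ((if i = l ∧ j ≠ l then ν else 0) + (if i ≠ l ∧ j = l then ν else 0)) := by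
        refine Finset.sum_le_sum fun i _ => Finset.sum_le_sum fun j _ => ?_
        by_cases hi : i = l <;> by_cases hj : j = l
        · have hij : i = j := hi.trans hj.symm
          simp [hij, hi, hj]
        · have h2 : (if i ≠ l ∧ j = l then ν else (0:ℝ)) = 0 := by simp [hj]
          rw [h2, add_zero, show (if i = l ∧ j ≠ l then ν else (0:ℝ)) = ν from if_pos ⟨hi, hj⟩]
          exact key _ _ _ _ _ _
        · have h1 : (if i = l ∧ j ≠ l then ν else (0:ℝ)) = 0 := by simp [hi]
          rw [h1, zero_add, show (if i ≠ l ∧ j = l then ν else (0:ℝ)) = ν from if_pos ⟨hi, hj⟩]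
          exact key _ _ _ _ _ _
        · rw [hup i hi, hup j hj]
          simp [hi, hj]
    _ = 2 * ((m:ℝ) - 1) * ν := by
        simp_rw [Finset.sum_add_distrib]
        have e1 : ∀ i : Fin m, ∑ j : Fin m, (if i = l ∧ j ≠ l then ν else (0:ℝ))
            = if i = l then ((m:ℝ) - 1) * ν else 0 := by
          intro i
          by_cases hi : i = l
          · simp only [hi, true_and, if_true]
            exact mmd_count_ne l ν
          · simp [hi]
        have e2 : ∀ i : Fin m, ∑ j : Fin m, (if i ≠ l ∧ j = l then ν else (0:ℝ))
            = if i ≠ l then ν else 0 := by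
          intro i
          by_cases hi : i = l
          · simp [hi]
          · simp only [hi, ne_eq, not_false_iff, true_and, if_true]
            exact mmd_count_eq l ν
        rw [Finset.sum_congr rfl (fun i _ => e1 i), Finset.sum_congr rfl (fun i _ => e2 i)]
        rw [mmd_count_ne l ν]
        have : ∑ i : Fin m, (if i = l then ((m:ℝ) - 1) * ν else 0) = ((m:ℝ) - 1) * ν :=
          mmd_count_eq l _
        rw [this]
        ring

lemma mmd_aux_T {U : Type*} (k : U → U → ℝ) (ν : ℝ)
    (hk : ∀ u u', 0 ≤ k u u' ∧ k u u' ≤ ν)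
    {m n : ℕ} (X : Fin m → U) (Y : Fin n → U) (l : Fin m) (x' : U) :
    |(∑ i, ∑ j, k (Function.update X l x' i) (Y j))
      - (∑ i, ∑ j, k (X i) (Y j))| ≤ (n:ℝ) * ν := by
  set X' := Function.update X l x' with hX'
  have hν : 0 ≤ ν := le_trans (hk x' x').1 (hk x' x').2
  have hup : ∀ i : Fin m, i ≠ l → X' i = X i := fun i hi => Function.update_of_ne hi _ _
  rw [← Finset.sum_sub_distrib]
  simp_rw [← Finset.sum_sub_distrib]
  calc |∑ i, ∑ j, (k (X' i) (Y j) - k (X i) (Y j))|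
      ≤ ∑ i, |∑ j, (k (X' i) (Y j) - k (X i) (Y j))| := Finset.abs_sum_le_sum_abs _ _
    _ ≤ ∑ i, ∑ j, |k (X' i) (Y j) - k (X i) (Y j)| :=
        Finset.sum_le_sum (fun i _ => Finset.abs_sum_le_sum_abs _ _)
    _ ≤ ∑ i : Fin m, ∑ _j : Fin n, (if i = l then ν else 0) := by
        refine Finset.sum_le_sum fun i _ => Finset.sum_le_sum fun j _ => ?_
        by_cases hi : i = l
        · rw [if_pos hi]
          have h1 := hk (X' i) (Y j); have h2 := hk (X i) (Y j)
          rw [abs_le]; constructor <;> linarith [h1.1, h1.2, h2.1, h2.2]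
        · rw [hup i hi]; simp [hi]
    _ = (n:ℝ) * ν := by
        have e : ∀ i : Fin m, ∑ _j : Fin n, (if i = l then ν else (0:ℝ))
            = if i = l then (n:ℝ) * ν else 0 := by
          intro i; by_cases hi : i = l <;> simp [hi, mul_comm]
        rw [Finset.sum_congr rfl (fun i _ => e i)]
        exact mmd_count_eq l _

/-- A swap of a single X-coordinate changes the bounded-kernel unbiased MMD
estimator by at most `4ν/m`. -/
theorem mmdU_single_swap_bounded {U : Type*} (k : U → U → ℝ) (ν : ℝ)
    (hk : ∀ u u', 0 ≤ k u u' ∧ k u u' ≤ ν)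
    {m n : ℕ} (hm : 2 ≤ m) (hn : 2 ≤ n)
    (X : Fin m → U) (Y : Fin n → U) (l : Fin m) (x' : U) :
    |mmdU k (Function.update X l x') Y - mmdU k X Y| ≤ 4 * ν / m := by
  have hν : 0 ≤ ν := le_trans (hk x' x').1 (hk x' x').2
  have hm2 : (2:ℝ) ≤ (m:ℝ) := by exact_mod_cast hm
  have hn2 : (2:ℝ) ≤ (n:ℝ) := by exact_mod_cast hn
  have hmpos : (0:ℝ) < m := by linarith
  have hnpos : (0:ℝ) < n := by linarith
  have hm1 : (0:ℝ) < (m:ℝ) - 1 := by linarith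
  set X' := Function.update X l x' with hX'
  set S := ∑ i, ∑ j, if i ≠ j then k (X i) (X j) else 0 with hS
  set S' := ∑ i, ∑ j, if i ≠ j then k (X' i) (X' j) else 0 with hS'
  set T := ∑ i, ∑ j, k (X i) (Y j) with hT
  set T' := ∑ i, ∑ j, k (X' i) (Y j) with hT'
  have hSb : |S' - S| ≤ 2 * ((m:ℝ) - 1) * ν := mmd_aux_S k ν hk X l x'
  have hTb : |T' - T| ≤ (n:ℝ) * ν := mmd_aux_T k ν hk X Y l x'
  have hdiff : mmdU k X' Y - mmdU k X Y
      = (S' - S) / ((m:ℝ) * ((m:ℝ) - 1)) - (2 / ((m:ℝ) * (n:ℝ))) * (T' - T) := by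
    simp only [mmdU, hS, hS', hT, hT']
    ring
  rw [hdiff]
  have h1 : |(S' - S) / ((m:ℝ) * ((m:ℝ) - 1))| ≤ 2 * ν / m := by
    rw [abs_div, abs_of_pos (by positivity : (0:ℝ) < (m:ℝ) * ((m:ℝ) - 1)),
      div_le_div_iff₀ (by positivity) hmpos]
    nlinarith [hSb, abs_nonneg (S' - S)]
  have h2 : |(2 / ((m:ℝ) * (n:ℝ))) * (T' - T)| ≤ 2 * ν / m := by
    rw [abs_mul, abs_of_pos (by positivity : (0:ℝ) < 2 / ((m:ℝ) * (n:ℝ)))]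
    calc 2 / ((m:ℝ) * (n:ℝ)) * |T' - T| ≤ 2 / ((m:ℝ) * (n:ℝ)) * ((n:ℝ) * ν) := by
          exact mul_le_mul_of_nonneg_left hTb (by positivity)
      _ = 2 * ν / m := by field_simp
  calc |(S' - S) / ((m:ℝ) * ((m:ℝ) - 1)) - (2 / ((m:ℝ) * (n:ℝ))) * (T' - T)|
      ≤ |(S' - S) / ((m:ℝ) * ((m:ℝ) - 1))| + |(2 / ((m:ℝ) * (n:ℝ))) * (T' - T)| :=
        abs_sub _ _
    _ ≤ 2 * ν / m + 2 * ν / m := add_le_add h1 h2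
    _ = 4 * ν / m := by ring
end

section
/- For the unbiased MMD U-statistic estimator with a kernel that is l-Lipschitz in each argument, a swap of a single X-coordinate X_l ↦ X_l' changes the value of the estimator by at most (4l/m)·‖X_l − X_l'‖. -/
open Finset

lemma sum_ite_ne_const {m : ℕ} (i : Fin m) (c : ℝ) :
    ∑ j : Fin m, (if i = j then (0:ℝ) else c) = ((m : ℝ) - 1) * c := by
  have h1 : ∑ j : Fin m, (if i = j then (0:ℝ) else c)
      = ∑ j : Fin m, (c - if j = i then c else 0) := by
    apply Finset.sum_congr rfl
    intro j _
    rcases eq_or_ne i j with h | h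
    · simp [h]
    · simp [h, Ne.symm h]
  rw [h1, Finset.sum_sub_distrib, Finset.sum_const, Finset.sum_ite_eq' univ i (fun _ => c)]
  simp [card_univ]
  ring

/-- A swap of a single X-coordinate changes the `l`-Lipschitz-kernel unbiased
MMD estimator by at most `(4l/m)·‖X_l − X_l'‖`. -/
theorem mmdU_single_swap_lipschitz {U : Type*} [NormedAddCommGroup U]
    (k : U → U → ℝ) (l : ℝ)
    (hk1 : ∀ u v u', |k u u' - k v u'| ≤ l * ‖u - v‖)
    (hk2 : ∀ u u' v', |k u u' - k u v'| ≤ l * ‖u' - v'‖)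
    {m n : ℕ} (hm : 2 ≤ m) (hn : 2 ≤ n)
    (X : Fin m → U) (Y : Fin n → U) (idx : Fin m) (x' : U) :
    |mmdU k (Function.update X idx x') Y - mmdU k X Y|
      ≤ (4 * l / m) * ‖X idx - x'‖ := by
  set X' := Function.update X idx x' with hX'
  set c := l * ‖X idx - x'‖ with hcdef
  have hX'i : X' idx = x' := Function.update_self idx x' X
  have hX'j : ∀ j : Fin m, j ≠ idx → X' j = X j := fun j h => Function.update_of_ne h x' X
  have key1 : ∀ u', |k x' u' - k (X idx) u'| ≤ c := by
    intro u'
    have := hk1 x' (X idx) u'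
    rwa [norm_sub_rev] at this
  have key2 : ∀ u, |k u x' - k u (X idx)| ≤ c := by
    intro u
    have := hk2 u x' (X idx)
    rwa [norm_sub_rev] at this
  have hc : 0 ≤ c := le_trans (abs_nonneg _) (key1 (X idx))
  have hmR : (2:ℝ) ≤ (m:ℝ) := by exact_mod_cast hm
  have hnR : (2:ℝ) ≤ (n:ℝ) := by exact_mod_cast hn
  have hm0 : (0:ℝ) < (m:ℝ) := by linarith
  have hn0 : (0:ℝ) < (n:ℝ) := by linarith
  have hm1 : (0:ℝ) < (m:ℝ) - 1 := by linarith
  -- the bound function for the XX term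
  set B : Fin m → Fin m → ℝ := fun i j =>
    if i = j then 0 else if i = idx then c else if j = idx then c else 0 with hB
  have hBsum : ∑ i, ∑ j, B i j = 2 * ((m:ℝ) - 1) * c := by
    have hinner : ∀ i : Fin m, ∑ j, B i j =
        if i = idx then ((m:ℝ) - 1) * c else c := by
      intro i
      rcases eq_or_ne i idx with h | h
      · subst h
        rw [if_pos rfl, ← sum_ite_ne_const i c]
        apply Finset.sum_congr rfl
        intro j _
        simp only [hB]
        rcases eq_or_ne i j with h' | h' <;> simp [h']
      · rw [if_neg h]
        have : ∀ j : Fin m, B i j = if j = idx then c else 0 := by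
          intro j
          simp only [hB]
          rcases eq_or_ne i j with h' | h'
          · subst h'; simp [h]
          · simp [h', h]
        rw [Finset.sum_congr rfl (fun j _ => this j),
          Finset.sum_ite_eq' univ idx (fun _ => c)]
        simp
    rw [Finset.sum_congr rfl (fun i _ => hinner i)]
    have : ∑ i : Fin m, (if i = idx then ((m:ℝ) - 1) * c else c)
        = ∑ i : Fin m, (c + if i = idx then ((m:ℝ) - 1) * c - c else 0) := by
      apply Finset.sum_congr rfl
      intro i _
      rcases eq_or_ne i idx with h | h <;> simp [h]
    rw [this, Finset.sum_add_distrib, Finset.sum_const,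
      Finset.sum_ite_eq' univ idx (fun _ => ((m:ℝ) - 1) * c - c)]
    simp [card_univ]
    ring
  have hA : |∑ i, ∑ j, ((if i ≠ j then k (X' i) (X' j) else 0)
      - (if i ≠ j then k (X i) (X j) else 0))| ≤ 2 * ((m:ℝ) - 1) * c := by
    rw [← hBsum]
    calc |∑ i, ∑ j, ((if i ≠ j then k (X' i) (X' j) else 0)
          - (if i ≠ j then k (X i) (X j) else 0))|
        ≤ ∑ i, |∑ j, ((if i ≠ j then k (X' i) (X' j) else 0)
          - (if i ≠ j then k (X i) (X j) else 0))| := Finset.abs_sum_le_sum_abs _ _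
      _ ≤ ∑ i, ∑ j, |(if i ≠ j then k (X' i) (X' j) else 0)
          - (if i ≠ j then k (X i) (X j) else 0)| :=
          Finset.sum_le_sum (fun i _ => Finset.abs_sum_le_sum_abs _ _)
      _ ≤ ∑ i, ∑ j, B i j := by
          apply Finset.sum_le_sum
          intro i _
          apply Finset.sum_le_sum
          intro j _
          simp only [hB]
          rcases eq_or_ne i j with h | h
          · simp [h]
          · rw [if_neg h, if_pos h, if_pos h]
            rcases eq_or_ne i idx with hi | hi
            · subst hi
              rw [if_pos rfl, hX'i, hX'j j (Ne.symm h)]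
              exact key1 (X j)
            · rw [if_neg hi, hX'j i hi]
              rcases eq_or_ne j idx with hj | hj
              · subst hj
                rw [if_pos rfl, hX'i]
                exact key2 (X i)
              · rw [if_neg hj, hX'j j hj]
                simp
  have hC : |∑ i, ∑ j, (k (X' i) (Y j) - k (X i) (Y j))| ≤ (n:ℝ) * c := by
    have hbnd : ∑ i : Fin m, ∑ _j : Fin n, (if i = idx then c else 0) = (n:ℝ) * c := by
      have : ∀ i : Fin m, ∑ _j : Fin n, (if i = idx then c else 0)
          = if i = idx then (n:ℝ) * c else 0 := by
        intro i
        rcases eq_or_ne i idx with h | h <;> simp [h, Finset.sum_const, card_univ, mul_comm]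
      rw [Finset.sum_congr rfl (fun i _ => this i),
        Finset.sum_ite_eq' univ idx (fun _ => (n:ℝ) * c)]
      simp
    rw [← hbnd]
    calc |∑ i, ∑ j, (k (X' i) (Y j) - k (X i) (Y j))|
        ≤ ∑ i, |∑ j, (k (X' i) (Y j) - k (X i) (Y j))| := Finset.abs_sum_le_sum_abs _ _
      _ ≤ ∑ i, ∑ j, |k (X' i) (Y j) - k (X i) (Y j)| :=
          Finset.sum_le_sum (fun i _ => Finset.abs_sum_le_sum_abs _ _)
      _ ≤ ∑ i : Fin m, ∑ _j : Fin n, (if i = idx then c else 0) := by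
          apply Finset.sum_le_sum
          intro i _
          apply Finset.sum_le_sum
          intro j _
          rcases eq_or_ne i idx with h | h
          · subst h
            rw [if_pos rfl, hX'i]
            exact key1 (Y j)
          · rw [if_neg h, hX'j i h]
            simp
  -- expand the difference
  have hexp : mmdU k X' Y - mmdU k X Y =
      (∑ i, ∑ j, ((if i ≠ j then k (X' i) (X' j) else 0)
        - (if i ≠ j then k (X i) (X j) else 0))) / ((m:ℝ) * ((m:ℝ) - 1))
      - (2 / ((m:ℝ) * (n:ℝ))) * ∑ i, ∑ j, (k (X' i) (Y j) - k (X i) (Y j)) := by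
    simp only [mmdU, Finset.sum_sub_distrib]
    ring
  rw [hexp]
  have h1 : |(∑ i, ∑ j, ((if i ≠ j then k (X' i) (X' j) else 0)
        - (if i ≠ j then k (X i) (X j) else 0))) / ((m:ℝ) * ((m:ℝ) - 1))|
      ≤ 2 * c / (m:ℝ) := by
    rw [abs_div, abs_of_pos (by positivity : (0:ℝ) < (m:ℝ) * ((m:ℝ) - 1))]
    rw [div_le_div_iff₀ (by positivity) hm0]
    calc |∑ i, ∑ j, ((if i ≠ j then k (X' i) (X' j) else 0)
          - (if i ≠ j then k (X i) (X j) else 0))| * (m:ℝ)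
        ≤ (2 * ((m:ℝ) - 1) * c) * (m:ℝ) := by
          apply mul_le_mul_of_nonneg_right hA (le_of_lt hm0)
      _ = 2 * c * ((m:ℝ) * ((m:ℝ) - 1)) := by ring
  have h2 : |(2 / ((m:ℝ) * (n:ℝ))) * ∑ i, ∑ j, (k (X' i) (Y j) - k (X i) (Y j))|
      ≤ 2 * c / (m:ℝ) := by
    rw [abs_mul, abs_of_pos (by positivity : (0:ℝ) < 2 / ((m:ℝ) * (n:ℝ)))]
    calc (2 / ((m:ℝ) * (n:ℝ))) * |∑ i, ∑ j, (k (X' i) (Y j) - k (X i) (Y j))|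
        ≤ (2 / ((m:ℝ) * (n:ℝ))) * ((n:ℝ) * c) := by
          apply mul_le_mul_of_nonneg_left hC (by positivity)
      _ = 2 * c / (m:ℝ) := by field_simp
  calc |_ - _| ≤ _ + _ := abs_sub _ _
    _ ≤ 2 * c / (m:ℝ) + 2 * c / (m:ℝ) := add_le_add h1 h2
    _ = (4 * l / m) * ‖X idx - x'‖ := by rw [hcdef]; field_simp; ring
end
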